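/- Suppose k ≥ 3, 1 ≤ u ≤ k(k+1)/2, and assume the Vinogradov mean value bound ∫_{[0,1)^k} |f_k(α; X)|^{2u} dα ≪_ε X^{u+ε} holds for all large X. Fix 1 ≤ t ≤ k and suffices 1 ≤ i_1 < ... < i_t ≤ k, write σ = i_1 + ... + i_t, and for 0 < T ≤ X let B_T(X) denote the set of tuples (α_ι)_{ι ∉ {i_1,...,i_t}} ∈ [0,1)^{k−t} such that |f_k(α; X)| > T for some choice of (α_{i_1},...,α_{i_t}) ∈ [0,1)^t. Then μ(B_T(X)) ≪_ε X^{u+t+σ+ε} T^{−2u−t}. -/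

import Mathlib

open MeasureTheory

/-- The Weyl sum `f_k(α; X) = ∑_{1 ≤ x ≤ X} e(α₁ x + ⋯ + α_k x^k)`. -/
noncomputable def weylSum (k : ℕ) (α : Fin k → ℝ) (X : ℝ) : ℂ :=
  ∑ x ∈ Finset.Icc 1 ⌊X⌋₊,
    Complex.exp (2 * Real.pi * Complex.I * (∑ j : Fin k, α j * (x : ℝ) ^ ((j : ℕ) + 1)))

/-- Assemble a full coefficient vector from the fixed coefficients (indexed by `I`)
and the non-fixed coefficients (indexed by the complement of `I`). -/
def combine (k : ℕ) (I : Finset (Fin k)) (αfix : {i : Fin k // i ∈ I} → ℝ)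
    (β : {i : Fin k // i ∉ I} → ℝ) : Fin k → ℝ :=
  fun i => if h : i ∈ I then αfix ⟨i, h⟩ else β ⟨i, h⟩

lemma exp_diff_le (s s' : ℝ) (h : 2 * Real.pi * |s' - s| ≤ 1) :
    ‖Complex.exp (2 * Real.pi * Complex.I * (s' : ℂ))
      - Complex.exp (2 * Real.pi * Complex.I * (s : ℂ))‖ ≤ 4 * Real.pi * |s' - s| := by
  have h1 : Complex.exp (2 * Real.pi * Complex.I * (s' : ℂ))
      - Complex.exp (2 * Real.pi * Complex.I * (s : ℂ))
      = Complex.exp (2 * Real.pi * Complex.I * (s : ℂ))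
        * (Complex.exp (2 * Real.pi * Complex.I * ((s' - s : ℝ) : ℂ)) - 1) := by
    rw [mul_sub, ← Complex.exp_add]
    push_cast
    ring_nf
  rw [h1, norm_mul]
  have h2 : ‖Complex.exp (2 * Real.pi * Complex.I * (s : ℂ))‖ = 1 := by
    have : (2 * Real.pi * Complex.I * (s : ℂ)) = ((2 * Real.pi * s : ℝ) : ℂ) * Complex.I := by
      push_cast; ring
    rw [this, Complex.norm_exp_ofReal_mul_I]
  rw [h2, one_mul]
  have h3 : ‖2 * Real.pi * Complex.I * ((s' - s : ℝ) : ℂ)‖ = 2 * Real.pi * |s' - s| := by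
    rw [norm_mul, norm_mul, norm_mul, Complex.norm_real, Complex.norm_I, Real.norm_eq_abs]
    simp [abs_of_pos Real.pi_pos]
    rw [← Complex.ofReal_sub, Complex.norm_real, Real.norm_eq_abs]
  calc ‖Complex.exp (2 * Real.pi * Complex.I * ((s' - s : ℝ) : ℂ)) - 1‖
      ≤ 2 * ‖2 * Real.pi * Complex.I * ((s' - s : ℝ) : ℂ)‖ :=
        Complex.norm_exp_sub_one_le (by rw [h3]; exact h)
    _ = 4 * Real.pi * |s' - s| := by rw [h3]; ring

lemma weylSum_perturb (k : ℕ) (hk : 0 < k) (X T : ℝ) (hX : 1 ≤ X) (hT0 : 0 < T) (hTX : T ≤ X)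
    (α α' : Fin k → ℝ)
    (h : ∀ j : Fin k, |α' j - α j| ≤ T / (8 * Real.pi * k * X ^ ((j : ℕ) + 2))) :
    ‖weylSum k α' X - weylSum k α X‖ ≤ T / 2 := by
  have hX0 : (0 : ℝ) < X := lt_of_lt_of_le one_pos hX
  have hπ : (0 : ℝ) < Real.pi := Real.pi_pos
  have key : ∀ x ∈ Finset.Icc 1 ⌊X⌋₊,
      ‖Complex.exp (2 * Real.pi * Complex.I *
          (∑ j : Fin k, α' j * (x : ℝ) ^ ((j : ℕ) + 1)))
        - Complex.exp (2 * Real.pi * Complex.I *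
          (∑ j : Fin k, α j * (x : ℝ) ^ ((j : ℕ) + 1)))‖ ≤ T / (2 * X) := by
    intro x hx
    set s : ℝ := ∑ j : Fin k, α j * (x : ℝ) ^ ((j : ℕ) + 1)
    set s' : ℝ := ∑ j : Fin k, α' j * (x : ℝ) ^ ((j : ℕ) + 1)
    have hxX : (x : ℝ) ≤ X := by
      have := (Finset.mem_Icc.mp hx).2
      calc (x : ℝ) ≤ (⌊X⌋₊ : ℝ) := by exact_mod_cast this
        _ ≤ X := Nat.floor_le (le_of_lt hX0)
    have hx0 : (0 : ℝ) ≤ (x : ℝ) := Nat.cast_nonneg x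
    have hdiff : |s' - s| ≤ T / (8 * Real.pi * X) := by
      have : s' - s = ∑ j : Fin k, (α' j - α j) * (x : ℝ) ^ ((j : ℕ) + 1) := by
        rw [← Finset.sum_sub_distrib]; congr 1; ext j; ring
      rw [this]
      calc |∑ j : Fin k, (α' j - α j) * (x : ℝ) ^ ((j : ℕ) + 1)|
          ≤ ∑ j : Fin k, |(α' j - α j) * (x : ℝ) ^ ((j : ℕ) + 1)| :=
            Finset.abs_sum_le_sum_abs _ _
        _ ≤ ∑ j : Fin k, T / (8 * Real.pi * k * X) := by
            apply Finset.sum_le_sum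
            intro j _
            rw [abs_mul, abs_pow, abs_of_nonneg hx0]
            calc |α' j - α j| * (x : ℝ) ^ ((j : ℕ) + 1)
                ≤ T / (8 * Real.pi * k * X ^ ((j : ℕ) + 2)) * X ^ ((j : ℕ) + 1) := by
                  apply mul_le_mul (h j) (pow_le_pow_left₀ hx0 hxX _)
                    (pow_nonneg hx0 _)
                  positivity
              _ = T / (8 * Real.pi * k * X) := by
                  rw [div_mul_eq_mul_div, pow_succ']
                  have hXp : (0:ℝ) < X ^ ((j : ℕ) + 1) := pow_pos hX0 _
                  field_simp
                  ring
        _ = T / (8 * Real.pi * X) := by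
            rw [Finset.sum_const, Finset.card_univ, Fintype.card_fin, nsmul_eq_mul]
            have hk' : (0:ℝ) < (k : ℝ) := by exact_mod_cast hk
            field_simp
    have hsmall : 2 * Real.pi * |s' - s| ≤ 1 := by
      calc 2 * Real.pi * |s' - s| ≤ 2 * Real.pi * (T / (8 * Real.pi * X)) := by
            apply mul_le_mul_of_nonneg_left hdiff (by positivity)
        _ = T / (4 * X) := by field_simp; ring
        _ ≤ X / (4 * X) := by apply div_le_div_of_nonneg_right hTX; positivity
        _ = 1 / 4 := by field_simp
        _ ≤ 1 := by norm_num
    calc ‖Complex.exp (2 * Real.pi * Complex.I * (s' : ℂ))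
          - Complex.exp (2 * Real.pi * Complex.I * (s : ℂ))‖
        ≤ 4 * Real.pi * |s' - s| := exp_diff_le s s' hsmall
      _ ≤ 4 * Real.pi * (T / (8 * Real.pi * X)) := by
          apply mul_le_mul_of_nonneg_left hdiff (by positivity)
      _ = T / (2 * X) := by field_simp; ring
  calc ‖weylSum k α' X - weylSum k α X‖
      = ‖∑ x ∈ Finset.Icc 1 ⌊X⌋₊,
          (Complex.exp (2 * Real.pi * Complex.I *
            (∑ j : Fin k, α' j * (x : ℝ) ^ ((j : ℕ) + 1)))
          - Complex.exp (2 * Real.pi * Complex.I *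
            (∑ j : Fin k, α j * (x : ℝ) ^ ((j : ℕ) + 1))))‖ := by
        unfold weylSum; rw [Finset.sum_sub_distrib]
    _ ≤ ∑ x ∈ Finset.Icc 1 ⌊X⌋₊, (T / (2 * X)) := by
        exact le_trans (norm_sum_le _ _) (Finset.sum_le_sum key)
    _ = (⌊X⌋₊ : ℝ) * (T / (2 * X)) := by
        rw [Finset.sum_const, nsmul_eq_mul, Nat.card_Icc]; norm_num
    _ ≤ X * (T / (2 * X)) := by
        apply mul_le_mul_of_nonneg_right (Nat.floor_le (le_of_lt hX0)); positivity
    _ = T / 2 := by field_simp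

lemma weylSum_continuous (k : ℕ) (X : ℝ) : Continuous (fun α : Fin k → ℝ => weylSum k α X) := by
  unfold weylSum
  apply continuous_finset_sum
  intro x _
  apply Complex.continuous_exp.comp
  apply continuous_const.mul
  apply Complex.continuous_ofReal.comp
  apply continuous_finset_sum
  intro j _
  exact (continuous_apply j).mul continuous_const

lemma weylSum_abs_le (k : ℕ) (α : Fin k → ℝ) (X : ℝ) :
    ‖weylSum k α X‖ ≤ (⌊X⌋₊ : ℝ) := by
  calc ‖weylSum k α X‖
      ≤ ∑ x ∈ Finset.Icc 1 ⌊X⌋₊, ‖Complex.exp (2 * Real.pi * Complex.I *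
          (∑ j : Fin k, α j * (x : ℝ) ^ ((j : ℕ) + 1)))‖ := norm_sum_le _ _
    _ ≤ ∑ x ∈ Finset.Icc 1 ⌊X⌋₊, 1 := by
        apply Finset.sum_le_sum
        intro x _
        have : (2 * Real.pi * Complex.I * ((∑ j : Fin k, α j * (x : ℝ) ^ ((j : ℕ) + 1) : ℝ) : ℂ))
            = ((2 * Real.pi * (∑ j : Fin k, α j * (x : ℝ) ^ ((j : ℕ) + 1)) : ℝ) : ℂ) * Complex.I := by
          push_cast; ring
        rw [this, Complex.norm_exp_ofReal_mul_I]
    _ = (⌊X⌋₊ : ℝ) := by rw [Finset.sum_const, Nat.card_Icc]; norm_num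

lemma combine_eq_symm (k : ℕ) (I : Finset (Fin k)) (a : {i : Fin k // i ∈ I} → ℝ)
    (b : {i : Fin k // i ∉ I} → ℝ) :
    (MeasurableEquiv.piEquivPiSubtypeProd (fun _ : Fin k => ℝ) (· ∈ I)).symm (a, b)
      = combine k I a b := rfl

lemma preimage_S (k : ℕ) (I : Finset (Fin k)) :
    (MeasurableEquiv.piEquivPiSubtypeProd (fun _ : Fin k => ℝ) (· ∈ I)) ⁻¹'
      ((Set.univ.pi fun _ : {i : Fin k // i ∈ I} => Set.Ico (0:ℝ) 1) ×ˢ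
       (Set.univ.pi fun _ : {i : Fin k // i ∉ I} => Set.Ico (0:ℝ) 1))
    = Set.univ.pi fun _ : Fin k => Set.Ico (0:ℝ) 1 := by
  ext α
  simp only [Set.mem_preimage, Set.mem_prod, Set.mem_univ_pi,
    MeasurableEquiv.piEquivPiSubtypeProd, MeasurableEquiv.coe_mk,
    Equiv.piEquivPiSubtypeProd_apply]
  constructor
  · rintro ⟨h1, h2⟩ i
    by_cases hi : i ∈ I
    · exact h1 ⟨i, hi⟩
    · exact h2 ⟨i, hi⟩
  · intro h
    exact ⟨fun i => h i, fun i => h i⟩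

lemma key_arith (C X T D ε : ℝ) (hX : 0 < X) (hT : 0 < T) (hD : 0 < D)
    (u t N : ℕ) :
    (T / 2) ^ (2 * u) * (T ^ t / (D ^ t * X ^ (N + t))) *
      (C * 2 ^ (2 * u) * D ^ t * X ^ (((u : ℝ) + t + N) + ε) * T ^ (-(2 * (u : ℝ) + t)))
      = C * X ^ ((u : ℝ) + ε) := by
  have h1 : X ^ (((u : ℝ) + t + N) + ε) = X ^ ((N + t : ℕ) : ℝ) * X ^ ((u : ℝ) + ε) := by
    rw [← Real.rpow_add hX]; congr 1; push_cast; ring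
  have h2 : T ^ (-(2 * (u : ℝ) + t)) = (T ^ (2 * u + t : ℕ) : ℝ)⁻¹ := by
    rw [← Real.rpow_natCast T (2 * u + t), ← Real.rpow_neg hT.le]
    congr 1; push_cast; ring
  rw [h1, h2, Real.rpow_natCast X (N + t)]
  have e1 : X ^ (N + t) ≠ 0 := by positivity
  have e2 : D ^ t ≠ 0 := by positivity
  have e3 : T ^ (2 * u + t) ≠ 0 := by positivity
  have e4 : (2 : ℝ) ^ (2 * u) ≠ 0 := by positivity
  rw [div_pow]
  field_simp
  ring

lemma prod_delta (k : ℕ) (I : Finset (Fin k)) (T D X : ℝ) :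
    ∏ i : {i : Fin k // i ∈ I}, (T / (D * X ^ ((i : ℕ) + 2)))
      = T ^ I.card / (D ^ I.card * X ^ ((∑ i ∈ I, ((i : ℕ) + 1)) + I.card)) := by
  rw [Finset.prod_div_distrib, Finset.prod_const, Finset.prod_mul_distrib, Finset.prod_const]
  have h1 : (Finset.univ : Finset {i : Fin k // i ∈ I}).card = I.card := by
    simp [Fintype.card_coe]
  rw [h1]
  congr 1
  congr 1
  rw [Finset.prod_pow_eq_pow_sum]
  congr 1
  have h2 : ∑ i : {i : Fin k // i ∈ I}, (((i : Fin k) : ℕ) + 2)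
      = ∑ i ∈ I, ((i : ℕ) + 2) := Finset.sum_coe_sort I (fun i => (i : ℕ) + 2)
  rw [h2, Finset.sum_add_distrib, Finset.sum_add_distrib, Finset.sum_const, Finset.sum_const]
  ring

/-- Lemma 2.2: under the mean value bound `∫ |f_k|^{2u} ≪_ε X^{u+ε}`, the set of
non-fixed coefficient tuples in `[0,1)^{k−t}` for which `|f_k(α;X)| > T` for some choice
of the fixed coefficients in `[0,1)^t` has measure `≪_ε X^{u+t+σ+ε} T^{−2u−t}`. -/
theorem measure_large_values (k u : ℕ) (hk : 3 ≤ k) (hu1 : 1 ≤ u)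
    (hu2 : 2 * u ≤ k * (k + 1)) (I : Finset (Fin k)) (ht1 : 1 ≤ I.card)
    (hmv : ∀ ε : ℝ, 0 < ε → ∃ C : ℝ, 0 < C ∧ ∀ X : ℝ, 1 ≤ X →
      (∫ α in (Set.univ.pi fun _ : Fin k => Set.Ico (0 : ℝ) 1),
        (‖weylSum k α X‖) ^ (2 * u)) ≤ C * X ^ ((u : ℝ) + ε)) :
    ∀ ε : ℝ, 0 < ε → ∃ C : ℝ, 0 < C ∧ ∀ X T : ℝ, 1 ≤ X → 0 < T → T ≤ X →
      volume {β : {i : Fin k // i ∉ I} → ℝ |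
          β ∈ Set.univ.pi (fun _ => Set.Ico (0 : ℝ) 1) ∧
          ∃ αfix : {i : Fin k // i ∈ I} → ℝ,
            αfix ∈ Set.univ.pi (fun _ => Set.Ico (0 : ℝ) 1) ∧
            T < ‖weylSum k (combine k I αfix β) X‖} ≤
        ENNReal.ofReal (C * X ^ (((u : ℝ) + I.card + ∑ i ∈ I, ((i : ℕ) + 1)) + ε) *
          T ^ (-(2 * (u : ℝ) + I.card))) := by
  have hπ : (0:ℝ) < Real.pi := Real.pi_pos
  have hk0 : 0 < k := by omega
  have hkR : (1:ℝ) ≤ (k:ℝ) := by exact_mod_cast hk0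
  intro ε hε
  obtain ⟨C, hC, hbound⟩ := hmv ε hε
  refine ⟨C * 2 ^ (2 * u) * (8 * Real.pi * k) ^ I.card, by positivity, ?_⟩
  intro X T hX hT0 hTX
  have hX0 : (0:ℝ) < X := lt_of_lt_of_le one_pos hX
  set D : ℝ := 8 * Real.pi * k with hD
  have hD0 : (0:ℝ) < D := by positivity
  have hD1 : (1:ℝ) ≤ D := by nlinarith [Real.pi_gt_three]
  set δ : {i : Fin k // i ∈ I} → ℝ := fun i => T / (D * X ^ (((i : Fin k) : ℕ) + 2)) with hδdef
  have hδpos : ∀ i, 0 < δ i := fun i => by dsimp [δ]; positivity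
  have hδ1 : ∀ i, δ i ≤ 1 := by
    intro i
    dsimp [δ]
    rw [div_le_one (by positivity)]
    calc T ≤ X := hTX
      _ = 1 * X := (one_mul X).symm
      _ ≤ D * X := by apply mul_le_mul_of_nonneg_right hD1 hX0.le
      _ ≤ D * X ^ (((i : Fin k) : ℕ) + 2) := by
          apply mul_le_mul_of_nonneg_left _ hD0.le
          exact le_self_pow₀ hX (by omega)
  set S : Set (Fin k → ℝ) := Set.univ.pi fun _ => Set.Ico (0:ℝ) 1 with hS
  set A : Set ({i : Fin k // i ∈ I} → ℝ) := Set.univ.pi fun _ => Set.Ico (0:ℝ) 1 with hA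
  set B2 : Set ({i : Fin k // i ∉ I} → ℝ) := Set.univ.pi fun _ => Set.Ico (0:ℝ) 1 with hB2
  set g : (Fin k → ℝ) → ENNReal :=
    fun α => ENNReal.ofReal ((‖weylSum k α X‖) ^ (2 * u)) with hgdef
  have hcont : Continuous fun α : Fin k → ℝ => (‖weylSum k α X‖) ^ (2 * u) :=
    (continuous_norm.comp (weylSum_continuous k X)).pow _
  have hgmeas : Measurable g := ENNReal.measurable_ofReal.comp hcont.measurable
  set e := MeasurableEquiv.piEquivPiSubtypeProd (fun _ : Fin k => ℝ) (· ∈ I) with he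
  set F : ({i : Fin k // i ∈ I} → ℝ) × ({i : Fin k // i ∉ I} → ℝ) → ENNReal :=
    fun p => g (e.symm p) with hF
  have hFmeas : Measurable F := hgmeas.comp e.symm.measurable
  set h : ({i : Fin k // i ∉ I} → ℝ) → ENNReal := fun b => ∫⁻ a in A, F (a, b) with hh
  have hhmeas : Measurable h := hFmeas.lintegral_prod_left'
  set cst : ENNReal := ENNReal.ofReal ((T/2)^(2*u) * ∏ i, δ i) with hcst
  have hprodpos : (0:ℝ) < ∏ i, δ i := Finset.prod_pos fun i _ => hδpos i
  have hcrealpos : (0:ℝ) < (T/2)^(2*u) * ∏ i, δ i := by positivity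
  have hcst0 : cst ≠ 0 := by
    rw [hcst]; exact (ENNReal.ofReal_pos.mpr hcrealpos).ne'
  have hcsttop : cst ≠ ⊤ := ENNReal.ofReal_ne_top
  set W := {b : {i : Fin k // i ∉ I} → ℝ | cst ≤ h b} ∩ B2 with hWdef
  have hB2meas : MeasurableSet B2 := MeasurableSet.univ_pi fun _ => measurableSet_Ico
  have hWmeas : MeasurableSet W :=
    (measurableSet_le measurable_const hhmeas).inter hB2meas
  have hsub : {β : {i : Fin k // i ∉ I} → ℝ | β ∈ B2 ∧
      ∃ αfix, αfix ∈ A ∧ T < ‖weylSum k (combine k I αfix β) X‖} ⊆ W := by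
    rintro b ⟨hb, αf, hαf, hTlt⟩
    refine ⟨?_, hb⟩
    set c : {i : Fin k // i ∈ I} → ℝ := fun i => min (αf i) (1 - δ i) with hcdef
    set Box : Set ({i : Fin k // i ∈ I} → ℝ) :=
      Set.univ.pi fun i => Set.Ico (c i) (c i + δ i) with hBoxdef
    have hαf' : ∀ i, αf i ∈ Set.Ico (0:ℝ) 1 := fun i => hαf i (Set.mem_univ i)
    have hc0 : ∀ i, 0 ≤ c i := fun i => le_min (hαf' i).1 (by linarith [hδ1 i])
    have hc1 : ∀ i, c i + δ i ≤ 1 := fun i => by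
      have := min_le_right (αf i) (1 - δ i); dsimp [c]; linarith
    have hBoxA : Box ⊆ A := by
      intro a ha i _
      have h1 := ha i (Set.mem_univ i)
      exact ⟨le_trans (hc0 i) h1.1, lt_of_lt_of_le h1.2 (hc1 i)⟩
    have hclose : ∀ a ∈ Box, ∀ i, |a i - αf i| ≤ δ i := by
      intro a ha i
      have h1 := ha i (Set.mem_univ i)
      have h2 : c i ≤ αf i := min_le_left _ _
      have h3 : αf i ≤ c i + δ i := by
        rcases le_or_gt (αf i) (1 - δ i) with hle | hlt
        · have hci : c i = αf i := min_eq_left hle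
          rw [hci]; linarith [(hδpos i).le]
        · have hci : c i = 1 - δ i := min_eq_right hlt.le
          rw [hci]; linarith [(hαf' i).2]
      rw [abs_le]
      constructor
      · linarith [h1.1]
      · linarith [h1.2]
    have hlow : ∀ a ∈ Box,
        (T/2)^(2*u) ≤ (‖weylSum k (combine k I a b) X‖) ^ (2*u) := by
      intro a ha
      have hpert := weylSum_perturb k hk0 X T hX hT0 hTX (combine k I αf b) (combine k I a b) ?_
      · have hkey : ‖weylSum k (combine k I αf b) X‖
            ≤ ‖weylSum k (combine k I a b) X‖ + T/2 := by
          calc ‖weylSum k (combine k I αf b) X‖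
              = ‖weylSum k (combine k I a b) X
                + (weylSum k (combine k I αf b) X - weylSum k (combine k I a b) X)‖ := by
                congr 1; ring
            _ ≤ ‖weylSum k (combine k I a b) X‖
                + ‖weylSum k (combine k I αf b) X
                  - weylSum k (combine k I a b) X‖ := norm_add_le _ _
            _ ≤ _ := by
                have : ‖weylSum k (combine k I αf b) X
                    - weylSum k (combine k I a b) X‖ ≤ T/2 := by
                  rw [norm_sub_rev]; exact hpert
                linarith
        have habs : T/2 ≤ ‖weylSum k (combine k I a b) X‖ := by linarith
        exact pow_le_pow_left₀ (by positivity) habs _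
      · intro j
        by_cases hj : j ∈ I
        · simp only [combine, dif_pos hj]
          exact hclose a ha ⟨j, hj⟩
        · simp only [combine, dif_neg hj, sub_self, abs_zero]
          positivity
    have hBoxmeas : MeasurableSet Box := MeasurableSet.univ_pi fun i => measurableSet_Ico
    have hBoxvol : volume Box = ENNReal.ofReal (∏ i, δ i) := by
      rw [hBoxdef, volume_pi_pi]
      simp only [Real.volume_Ico, add_sub_cancel_left]
      rw [ENNReal.ofReal_prod_of_nonneg (fun i _ => (hδpos i).le)]
    calc cst = ENNReal.ofReal ((T/2)^(2*u)) * ENNReal.ofReal (∏ i, δ i) := by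
          rw [hcst, ENNReal.ofReal_mul (by positivity)]
      _ = ENNReal.ofReal ((T/2)^(2*u)) * volume Box := by rw [hBoxvol]
      _ = ∫⁻ _ in Box, ENNReal.ofReal ((T/2)^(2*u)) := (setLIntegral_const _ _).symm
      _ ≤ ∫⁻ a in Box, F (a, b) := by
          apply setLIntegral_mono' hBoxmeas
          intro a ha
          exact ENNReal.ofReal_le_ofReal (hlow a ha)
      _ ≤ ∫⁻ a in A, F (a, b) := lintegral_mono_set hBoxA
  have hSmeas : MeasurableSet S := MeasurableSet.univ_pi fun _ => measurableSet_Ico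
  have hSvol : volume S = 1 := by
    rw [hS, volume_pi_pi]; simp [Real.volume_Ico]
  have hIntS : ∫⁻ α in S, g α ≤ ENNReal.ofReal (C * X ^ ((u:ℝ) + ε)) := by
    have hint : IntegrableOn (fun α => (‖weylSum k α X‖) ^ (2*u)) S volume := by
      refine ⟨hcont.aestronglyMeasurable, ?_⟩
      apply HasFiniteIntegral.restrict_of_bounded (C := ((⌊X⌋₊:ℝ))^(2*u))
        (by rw [hSvol]; exact ENNReal.one_lt_top)
      apply ae_of_all
      intro α
      rw [Real.norm_eq_abs, abs_of_nonneg (by positivity)]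
      exact pow_le_pow_left₀ (by positivity) (weylSum_abs_le k α X) _
    rw [hgdef]
    rw [← ofReal_integral_eq_lintegral_ofReal hint (ae_of_all _ fun α => by positivity)]
    exact ENNReal.ofReal_le_ofReal (hbound X hX)
  have hchange : ∫⁻ b in B2, h b = ∫⁻ α in S, g α := by
    have hsymm : MeasurePreserving e.symm
        ((volume : Measure ({i : Fin k // i ∈ I} → ℝ)).prod
          (volume : Measure ({i : Fin k // i ∉ I} → ℝ))) (volume : Measure (Fin k → ℝ)) := by
      refine ⟨e.symm.measurable, (Measure.pi_eq fun s _ => ?_).symm⟩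
      have hpre2 : e.symm ⁻¹' Set.pi Set.univ s =
          (Set.pi Set.univ fun i : {i : Fin k // i ∈ I} => s i) ×ˢ
            (Set.pi Set.univ fun i : {i : Fin k // i ∉ I} => s i) :=
        Equiv.preimage_piEquivPiSubtypeProd_symm_pi (· ∈ I) s
      rw [MeasurableEquiv.map_apply, hpre2, Measure.prod_prod, volume_pi_pi, volume_pi_pi]
      have hft : (Finset.Subtype.fintype I) = (Subtype.fintype fun x => x ∈ I) :=
        Subsingleton.elim _ _
      rw [hft]
      exact Fintype.prod_subtype_mul_prod_subtype (· ∈ I) fun i => volume (s i)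
    have hmp : MeasurePreserving e (volume : Measure (Fin k → ℝ))
        ((volume : Measure ({i : Fin k // i ∈ I} → ℝ)).prod
          (volume : Measure ({i : Fin k // i ∉ I} → ℝ))) := by
      have := hsymm.symm e.symm
      rwa [MeasurableEquiv.symm_symm] at this
    have h2 := hmp.setLIntegral_comp_preimage_emb e.measurableEmbedding F (A ×ˢ B2)
    have hpre : e ⁻¹' (A ×ˢ B2) = S := preimage_S k I
    calc ∫⁻ b in B2, h b
        = ∫⁻ p, F p ∂((volume.restrict A).prod (volume.restrict B2)) :=
          (lintegral_prod_symm' F hFmeas).symm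
      _ = ∫⁻ p in A ×ˢ B2, F p ∂((volume : Measure ({i : Fin k // i ∈ I} → ℝ)).prod
            (volume : Measure ({i : Fin k // i ∉ I} → ℝ))) := by
          rw [Measure.prod_restrict]
      _ = ∫⁻ α in e ⁻¹' (A ×ˢ B2), F (e α) := h2.symm
      _ = ∫⁻ α in S, g α := by
          rw [hpre]
          apply lintegral_congr
          intro α
          rw [hF]
          simp only [MeasurableEquiv.symm_apply_apply]
  have hWle : cst * volume W ≤ ENNReal.ofReal (C * X^((u:ℝ)+ε)) := by
    calc cst * volume W = ∫⁻ _ in W, cst := (setLIntegral_const W cst).symm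
      _ ≤ ∫⁻ b in W, h b := setLIntegral_mono' hWmeas (fun b hb => hb.1)
      _ ≤ ∫⁻ b in B2, h b := lintegral_mono_set Set.inter_subset_right
      _ = ∫⁻ α in S, g α := hchange
      _ ≤ _ := hIntS
  have hEq : ENNReal.ofReal (C * X^((u:ℝ)+ε))
      = cst * ENNReal.ofReal (C * 2 ^ (2 * u) * (8 * Real.pi * k) ^ I.card *
          X ^ (((u : ℝ) + I.card + ∑ i ∈ I, ((i : ℕ) + 1)) + ε) *
          T ^ (-(2 * (u : ℝ) + I.card))) := by
    rw [hcst, ← ENNReal.ofReal_mul hcrealpos.le]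
    congr 1
    have hprod : (∏ i, δ i)
        = T ^ I.card / (D ^ I.card * X ^ ((∑ i ∈ I, ((i : ℕ) + 1)) + I.card)) :=
      prod_delta k I T D X
    rw [hprod, ← hD]
    rw [show ((((u : ℝ) + I.card + ∑ i ∈ I, ((i : ℕ) + 1)) + ε) : ℝ)
        = ((((u : ℝ) + I.card + ((∑ i ∈ I, ((i : ℕ) + 1) : ℕ) : ℝ))) + ε) by push_cast; ring]
    exact (key_arith C X T D ε hX0 hT0 hD0 u I.card (∑ i ∈ I, ((i : ℕ) + 1))).symm
  rw [← ENNReal.mul_le_mul_iff_right hcst0 hcsttop, ← hEq]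
  calc cst * volume _ ≤ cst * volume W := by
        exact mul_le_mul_right (measure_mono hsub) _
    _ ≤ _ := hWle
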